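/- Let p be a prime. Then S^{(p)}(n1,n2,m1,m2;p,p^2) = r_p(m1) · S(n2, m2 p; p^2), where S(a,b;c) is the classical Kloosterman sum and r_p the Ramanujan sum mod p. -/

import Mathlib

open Finset

/-- `e(x) = exp(2πix)`. -/
noncomputable def eChar (x : ℝ) : ℂ := Complex.exp (2 * Real.pi * Complex.I * x)

/-- Ramanujan sum `r_q(n) = Σ_{a mod q, (a,q)=1} e(an/q)`. -/
noncomputable def ramanujanSum (q : ℕ) (n : ℤ) : ℂ :=
  ∑ a ∈ Finset.range q, if Nat.gcd a q = 1 then eChar ((a : ℝ) * (n : ℝ) / q) else 0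

/-- The GL(3) Kloosterman sum `S^{(N)}(n1,n2,m1,m2;D1,D2)`.  The summand is independent of
the choice of `(Y_j, Z_j)` with `Y_j B_j + Z_j C_j ≡ 1 mod D_j`; since there are exactly
`D_j` such pairs modulo `D_j`, we sum over all of them and divide by `D1 * D2`. -/
noncomputable def Kloosterman3 (N : ℕ) (n1 n2 m1 m2 : ℤ) (D1 D2 : ℕ) : ℂ :=
  (1 / ((D1 : ℂ) * (D2 : ℂ))) *
  ∑ B1 ∈ range D1, ∑ C1 ∈ range D1, ∑ Y1 ∈ range D1, ∑ Z1 ∈ range D1,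
  ∑ B2 ∈ range D2, ∑ C2 ∈ range D2, ∑ Y2 ∈ range D2, ∑ Z2 ∈ range D2,
    if ((D1 : ℤ) * C2 + (B1 : ℤ) * B2 + (D2 : ℤ) * C1) % ((D1 : ℤ) * D2) = 0 ∧
       Nat.gcd (Nat.gcd B1 C1) D1 = 1 ∧ Nat.gcd (Nat.gcd B2 C2) D2 = 1 ∧
       (N : ℤ) ∣ (B1 : ℤ) ∧
       ((Y1 : ℤ) * B1 + (Z1 : ℤ) * C1) % (D1 : ℤ) = 1 % (D1 : ℤ) ∧
       ((Y2 : ℤ) * B2 + (Z2 : ℤ) * C2) % (D2 : ℤ) = 1 % (D2 : ℤ) then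
      eChar (((n1 * B1 + m1 * ((Y1 : ℤ) * D2 - (Z1 : ℤ) * B2) : ℤ) : ℝ) / D1 +
             ((n2 * B2 + m2 * ((Y2 : ℤ) * D1 - (Z2 : ℤ) * B1) : ℤ) : ℝ) / D2)
    else 0

/-- The classical Kloosterman sum `S(a,b;c) = Σ_{x x̄ ≡ 1 mod c} e((ax + b x̄)/c)`. -/
noncomputable def Kloosterman2 (a b : ℤ) (c : ℕ) : ℂ :=
  ∑ x ∈ range c, ∑ y ∈ range c,
    if ((x : ℤ) * y) % (c : ℤ) = 1 % (c : ℤ) then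
      eChar (((a * x + b * y : ℤ) : ℝ) / c) else 0


lemma eChar_add (x y : ℝ) : eChar (x + y) = eChar x * eChar y := by
  unfold eChar; rw [← Complex.exp_add]; push_cast; ring_nf

lemma eChar_intCast (k : ℤ) : eChar k = 1 := by
  unfold eChar
  have h : 2 * (Real.pi:ℂ) * Complex.I * ((k:ℝ):ℂ) = (k:ℤ) * (2 * (Real.pi:ℂ) * Complex.I) := by
    push_cast; ring
  rw [h, Complex.exp_int_mul_two_pi_mul_I]

lemma eChar_add_int (x : ℝ) (k : ℤ) : eChar (x + k) = eChar x := by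
  rw [eChar_add, eChar_intCast, mul_one]

lemma eChar_div_congr (c : ℕ) (hc : c ≠ 0) (a b : ℤ) (h : (c:ℤ) ∣ (b - a)) :
    eChar ((a:ℝ)/c) = eChar ((b:ℝ)/c) := by
  obtain ⟨t, ht⟩ := h
  have hc' : (c:ℝ) ≠ 0 := Nat.cast_ne_zero.2 hc
  have hb : (b:ℝ)/c = (a:ℝ)/c + t := by
    field_simp
    have : (b:ℝ) = a + c * t := by
      have := congrArg (Int.cast : ℤ → ℝ) ht; push_cast at this; linarith
    rw [this]
  rw [hb, eChar_add_int]

lemma mod_iff_zmod (N : ℕ) (a b : ℤ) : a % (N:ℤ) = b % (N:ℤ) ↔ ((a : ZMod N) = (b : ZMod N)) :=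
  Iff.symm (ZMod.intCast_eq_intCast_iff a b N)

lemma natcast_inj_of_lt {n x y : ℕ} (hx : x < n) (hy : y < n) (h : (x : ZMod n) = y) : x = y := by
  have : NeZero n := ⟨by omega⟩
  rw [← ZMod.val_cast_of_lt hx, ← ZMod.val_cast_of_lt hy, h]


noncomputable def Ebar (p : ℕ) (n2 m1 m2 : ℤ) (Y1 Z1 B2 : ℕ) : ℂ :=
  eChar ((↑(m1 * ((Y1:ℤ) * (p:ℤ)^2 - (Z1:ℤ) * (B2:ℤ))):ℝ) / (p:ℝ) +
    (↑(n2 * (B2:ℤ) + m2 * ((((B2 : ZMod (p^2))⁻¹).val : ℤ) * (p:ℤ))):ℝ) / (p:ℝ)^2)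

set_option maxHeartbeats 1000000 in
lemma triple (p : ℕ) (hp : p.Prime) (n2 m1 m2 : ℤ) (C1 Y1 Z1 B2 : ℕ) :
    (∑ C2 ∈ range (p^2), ∑ Y2 ∈ range (p^2), ∑ Z2 ∈ range (p^2),
      if ((p:ℤ) * (C2:ℤ) + (p:ℤ)^2 * (C1:ℤ)) % ((p:ℤ) * (p:ℤ)^2) = 0 ∧
         C1.gcd p = 1 ∧ (B2.gcd C2).gcd (p^2) = 1 ∧
         ((Z1:ℤ) * (C1:ℤ)) % (p:ℤ) = 1 % (p:ℤ) ∧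
         ((Y2:ℤ) * (B2:ℤ) + (Z2:ℤ) * (C2:ℤ)) % (p:ℤ)^2 = 1 % (p:ℤ)^2 then
        eChar ((↑(m1 * ((Y1:ℤ) * (p:ℤ)^2 - (Z1:ℤ) * (B2:ℤ))):ℝ) / (p:ℝ) +
          (↑(n2 * (B2:ℤ) + m2 * ((Y2:ℤ) * (p:ℤ))):ℝ) / (p:ℝ)^2)
      else 0)
    = if C1.gcd p = 1 ∧ B2.gcd (p^2) = 1 ∧ ((Z1:ℤ) * (C1:ℤ)) % (p:ℤ) = 1 % (p:ℤ) then
        ((p:ℂ))^2 * Ebar p n2 m1 m2 Y1 Z1 B2 else 0 := by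
  haveI : NeZero (p^2) := ⟨pow_ne_zero 2 hp.ne_zero⟩
  have hpne : (p:ℤ) ≠ 0 := Int.natCast_ne_zero.2 hp.ne_zero
  have hp2cast : ((p:ℤ)^2) = ((p^2 : ℕ) : ℤ) := by push_cast; ring
  -- condition c1 as dvd and as ZMod equation
  have hc1dvd : ∀ C2 : ℕ, (((p:ℤ) * (C2:ℤ) + (p:ℤ)^2 * (C1:ℤ)) % ((p:ℤ) * (p:ℤ)^2) = 0 ↔
      ((p:ℤ)^2) ∣ ((C2:ℤ) + (p:ℤ) * C1)) := by
    intro C2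
    rw [← Int.dvd_iff_emod_eq_zero,
      show ((p:ℤ) * (C2:ℤ) + (p:ℤ)^2 * (C1:ℤ)) = (p:ℤ) * ((C2:ℤ) + (p:ℤ) * C1) from by ring,
      mul_dvd_mul_iff_left hpne]
  have hdvdzmod : ∀ C2 : ℕ, (((p:ℤ)^2) ∣ ((C2:ℤ) + (p:ℤ) * C1) ↔
      ((C2 : ZMod (p^2)) = ((-(p:ℤ) * C1 : ℤ) : ZMod (p^2)))) := by
    intro C2
    rw [hp2cast, ← ZMod.intCast_zmod_eq_zero_iff_dvd]
    push_cast
    constructor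
    · intro h
      have := add_eq_zero_iff_eq_neg.mp h
      rw [this]; ring
    · intro h
      rw [add_eq_zero_iff_eq_neg, h]; ring
  have hc1iff : ∀ C2 : ℕ, (((p:ℤ) * (C2:ℤ) + (p:ℤ)^2 * (C1:ℤ)) % ((p:ℤ) * (p:ℤ)^2) = 0 ↔
      ((C2 : ZMod (p^2)) = ((-(p:ℤ) * C1 : ℤ) : ZMod (p^2)))) :=
    fun C2 => (hc1dvd C2).trans (hdvdzmod C2)
  -- c1 implies p ∣ C2
  have hpdvdC2 : ∀ C2 : ℕ, ((p:ℤ)^2) ∣ ((C2:ℤ) + (p:ℤ) * C1) → (p:ℕ) ∣ C2 := by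
    intro C2 h
    have h1 : (p:ℤ) ∣ ((C2:ℤ) + (p:ℤ) * C1) := dvd_trans ⟨(p:ℤ), by ring⟩ h
    have h2 : (p:ℤ) ∣ (C2:ℤ) := by
      have := h1.sub (Dvd.intro (C1:ℤ) rfl)
      simpa using this
    exact_mod_cast h2
  by_cases hcase : C1.gcd p = 1 ∧ B2.gcd (p^2) = 1 ∧ ((Z1:ℤ) * (C1:ℤ)) % (p:ℤ) = 1 % (p:ℤ)
  · obtain ⟨h1, h2, h3⟩ := hcase
    rw [if_pos ⟨h1, h2, h3⟩]
    -- the unique C2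
    set c2w : ℕ := ((-(p:ℤ) * C1 : ℤ) : ZMod (p^2)).val with hc2wdef
    have hc2wlt : c2w < p^2 := ZMod.val_lt _
    have hc2wcast : ((c2w : ℕ) : ZMod (p^2)) = ((-(p:ℤ) * C1 : ℤ) : ZMod (p^2)) := by
      rw [hc2wdef, ZMod.natCast_val, ZMod.cast_id]
    have hc1w : ((p:ℤ) * (c2w:ℤ) + (p:ℤ)^2 * (C1:ℤ)) % ((p:ℤ) * (p:ℤ)^2) = 0 :=
      (hc1iff c2w).mpr hc2wcast
    have hpc2 : (p:ℕ) ∣ c2w := hpdvdC2 c2w ((hc1dvd c2w).mp hc1w)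
    rw [Finset.sum_eq_single_of_mem c2w (mem_range.2 hc2wlt) ?hC2]
    case hC2 =>
      intro b hbr hb
      refine Finset.sum_eq_zero fun Y2 _ => Finset.sum_eq_zero fun Z2 _ => ?_
      rw [if_neg]
      rintro ⟨hc1b, -⟩
      exact hb (natcast_inj_of_lt (mem_range.1 hbr) hc2wlt
        (((hc1iff b).mp hc1b).trans hc2wcast.symm))
    -- now the Y2, Z2 double sum with C2 = c2w
    have hu : IsUnit ((B2 : ℕ) : ZMod (p^2)) := (ZMod.isUnit_iff_coprime B2 (p^2)).2 h2
    have hgcdw : (B2.gcd c2w).gcd (p^2) = 1 :=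
      Nat.Coprime.coprime_dvd_left (Nat.gcd_dvd_left B2 c2w) h2
    rw [Finset.sum_comm]
    have hZ2 : ∀ Z2 ∈ range (p^2),
        (∑ Y2 ∈ range (p^2),
          if ((p:ℤ) * (c2w:ℤ) + (p:ℤ)^2 * (C1:ℤ)) % ((p:ℤ) * (p:ℤ)^2) = 0 ∧
             C1.gcd p = 1 ∧ (B2.gcd c2w).gcd (p^2) = 1 ∧
             ((Z1:ℤ) * (C1:ℤ)) % (p:ℤ) = 1 % (p:ℤ) ∧
             ((Y2:ℤ) * (B2:ℤ) + (Z2:ℤ) * (c2w:ℤ)) % (p:ℤ)^2 = 1 % (p:ℤ)^2 then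
            eChar ((↑(m1 * ((Y1:ℤ) * (p:ℤ)^2 - (Z1:ℤ) * (B2:ℤ))):ℝ) / (p:ℝ) +
              (↑(n2 * (B2:ℤ) + m2 * ((Y2:ℤ) * (p:ℤ))):ℝ) / (p:ℝ)^2)
          else 0)
        = Ebar p n2 m1 m2 Y1 Z1 B2 := by
      intro Z2 _
      set w : ℕ := (((B2 : ZMod (p^2))⁻¹) * (1 - (Z2 : ZMod (p^2)) * (c2w : ZMod (p^2)))).val
        with hwdef
      have hwlt : w < p^2 := ZMod.val_lt _
      have hwcast : ((w : ℕ) : ZMod (p^2)) =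
          ((B2 : ZMod (p^2))⁻¹) * (1 - (Z2 : ZMod (p^2)) * (c2w : ZMod (p^2))) := by
        rw [hwdef, ZMod.natCast_val, ZMod.cast_id]
      -- condition c6 as ZMod equation
      have hc6iff : ∀ Y2 : ℕ, (((Y2:ℤ) * (B2:ℤ) + (Z2:ℤ) * (c2w:ℤ)) % (p:ℤ)^2 = 1 % (p:ℤ)^2 ↔
          ((Y2 : ZMod (p^2)) * (B2 : ZMod (p^2)) + (Z2 : ZMod (p^2)) * (c2w : ZMod (p^2)) = 1)) := by
        intro Y2
        rw [hp2cast, mod_iff_zmod]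
        push_cast
        rfl
      have hc6uniq : ∀ Y2 : ℕ, ((Y2 : ZMod (p^2)) * (B2 : ZMod (p^2)) +
          (Z2 : ZMod (p^2)) * (c2w : ZMod (p^2)) = 1) → (Y2 : ZMod (p^2)) = (w : ZMod (p^2)) := by
        intro Y2 h
        have : (Y2 : ZMod (p^2)) * (B2 : ZMod (p^2)) = 1 - (Z2 : ZMod (p^2)) * (c2w : ZMod (p^2)) := by
          linear_combination h
        calc (Y2 : ZMod (p^2)) = (Y2 : ZMod (p^2)) * ((B2 : ZMod (p^2)) * (B2 : ZMod (p^2))⁻¹) := by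
              rw [ZMod.mul_inv_of_unit _ hu, mul_one]
          _ = ((B2 : ZMod (p^2))⁻¹) * ((Y2 : ZMod (p^2)) * (B2 : ZMod (p^2))) := by ring
          _ = (w : ZMod (p^2)) := by rw [this, hwcast]
      rw [Finset.sum_eq_single_of_mem w (mem_range.2 hwlt) ?hY2]
      case hY2 =>
        intro b hbr hb
        rw [if_neg]
        rintro ⟨-, -, -, -, hc6⟩
        exact hb (natcast_inj_of_lt (mem_range.1 hbr) hwlt (hc6uniq b ((hc6iff b).mp hc6)))
      -- witness term
      have hc6w : ((w:ℤ) * (B2:ℤ) + (Z2:ℤ) * (c2w:ℤ)) % (p:ℤ)^2 = 1 % (p:ℤ)^2 := by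
        rw [hc6iff w, hwcast]
        have : ((B2 : ZMod (p^2))⁻¹) * (1 - (Z2 : ZMod (p^2)) * (c2w : ZMod (p^2))) * (B2 : ZMod (p^2))
            = ((B2 : ZMod (p^2))⁻¹ * (B2 : ZMod (p^2))) * (1 - (Z2 : ZMod (p^2)) * (c2w : ZMod (p^2))) := by
          ring
        rw [this, ZMod.inv_mul_of_unit _ hu, one_mul]
        ring
      rw [if_pos ⟨hc1w, h1, hgcdw, h3, hc6w⟩]
      -- value equality: w ≡ B2⁻¹ mod p
      set ybar : ℕ := ((B2 : ZMod (p^2))⁻¹).val with hybardef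
      have hybarcast : ((ybar : ℕ) : ZMod (p^2)) = (B2 : ZMod (p^2))⁻¹ := by
        rw [hybardef, ZMod.natCast_val, ZMod.cast_id]
      have hmodp : ((w : ZMod p)) = ((ybar : ZMod p)) := by
        have hdvd : (p:ℕ) ∣ p^2 := dvd_pow_self p two_ne_zero
        have φeq : ∀ a : ℕ, (ZMod.castHom hdvd (ZMod p)) ((a : ZMod (p^2))) = (a : ZMod p) := by
          intro a; simp [map_natCast]
        have hc2wzero : ((c2w : ZMod p)) = 0 := (ZMod.natCast_eq_zero_iff c2w p).2 hpc2
        have := congrArg (ZMod.castHom hdvd (ZMod p)) hwcast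
        rw [φeq] at this
        rw [this]
        have := congrArg (ZMod.castHom hdvd (ZMod p)) hybarcast
        rw [φeq] at this
        rw [this]
        rw [map_mul, map_sub, map_one, map_mul]
        rw [show (ZMod.castHom hdvd (ZMod p)) ((c2w : ZMod (p^2))) = ((c2w : ZMod p)) from φeq c2w,
          hc2wzero]
        ring
      have hwyint : (p:ℤ) ∣ ((ybar:ℤ) - (w:ℤ)) := by
        have : ((ybar:ℤ) : ZMod p) = ((w:ℤ) : ZMod p) := by
          push_cast
          exact hmodp.symm
        have h' := (ZMod.intCast_eq_intCast_iff _ _ _).mp this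
        exact (Int.ModEq.dvd h'.symm)
      unfold Ebar
      rw [eChar_add, eChar_add]
      congr 1
      rw [show ((p:ℝ))^2 = ((p^2:ℕ):ℝ) from by push_cast; ring]
      apply eChar_div_congr (p^2) (pow_ne_zero 2 hp.ne_zero)
      rw [← hp2cast]
      have : (n2 * (B2:ℤ) + m2 * (((ybar:ℕ):ℤ) * (p:ℤ))) - (n2 * (B2:ℤ) + m2 * ((w:ℤ) * (p:ℤ)))
          = ((ybar:ℤ) - (w:ℤ)) * m2 * (p:ℤ) := by push_cast; ring
      rw [this]
      rcases hwyint with ⟨t, ht⟩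
      exact ⟨t * m2, by rw [ht]; ring⟩
    rw [Finset.sum_congr rfl hZ2, Finset.sum_const, card_range, nsmul_eq_mul]
    push_cast
    ring
  · rw [if_neg hcase]
    refine Finset.sum_eq_zero fun C2 _ => Finset.sum_eq_zero fun Y2 _ =>
      Finset.sum_eq_zero fun Z2 _ => ?_
    rw [if_neg]
    rintro ⟨hc1, hh1, hh2, hh3, -⟩
    apply hcase
    refine ⟨hh1, ?_, hh3⟩
    -- B2 coprime to p^2
    by_contra hB2
    have hpB2 : (p:ℕ) ∣ B2 := by
      have : ¬ Nat.Coprime B2 p := by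
        intro hc
        exact hB2 (Nat.Coprime.pow_right 2 hc)
      rcases (Nat.coprime_or_dvd_of_prime hp B2) with h | h
      · exact absurd (Nat.Coprime.symm h) this
      · exact h
    have hpC2 : (p:ℕ) ∣ C2 := hpdvdC2 C2 ((hc1dvd C2).mp hc1)
    have hd1 : (p:ℕ) ∣ 1 := by
      rw [← hh2]
      exact Nat.dvd_gcd (Nat.dvd_gcd hpB2 hpC2) (dvd_pow_self p two_ne_zero)
    have h1le := Nat.le_of_dvd one_pos hd1
    have h2le := hp.two_le
    omega

lemma Ebar_Y1 (p : ℕ) (hp : p.Prime) (n2 m1 m2 : ℤ) (Y1 Z1 B2 : ℕ) :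
    Ebar p n2 m1 m2 Y1 Z1 B2 = Ebar p n2 m1 m2 0 Z1 B2 := by
  unfold Ebar
  rw [eChar_add, eChar_add]
  congr 1
  apply eChar_div_congr p hp.ne_zero
  exact ⟨-(m1 * Y1 * p), by push_cast; ring⟩

noncomputable def midTerm (p : ℕ) (n2 m1 m2 : ℤ) (C1 : ℕ) : ℂ :=
  if C1.gcd p = 1 then
    ∑ B2 ∈ range (p^2), (if B2.gcd (p^2) = 1 then
      Ebar p n2 m1 m2 0 (((C1 : ZMod p)⁻¹).val) B2 else 0)
  else 0

lemma sextuple (p : ℕ) (hp : p.Prime) (n2 m1 m2 : ℤ) (C1 : ℕ) :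
    (∑ Y1 ∈ range p, ∑ Z1 ∈ range p, ∑ B2 ∈ range (p^2),
     ∑ C2 ∈ range (p^2), ∑ Y2 ∈ range (p^2), ∑ Z2 ∈ range (p^2),
      if ((p:ℤ) * (C2:ℤ) + (p:ℤ)^2 * (C1:ℤ)) % ((p:ℤ) * (p:ℤ)^2) = 0 ∧
         C1.gcd p = 1 ∧ (B2.gcd C2).gcd (p^2) = 1 ∧
         ((Z1:ℤ) * (C1:ℤ)) % (p:ℤ) = 1 % (p:ℤ) ∧
         ((Y2:ℤ) * (B2:ℤ) + (Z2:ℤ) * (C2:ℤ)) % (p:ℤ)^2 = 1 % (p:ℤ)^2 then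
        eChar ((↑(m1 * ((Y1:ℤ) * (p:ℤ)^2 - (Z1:ℤ) * (B2:ℤ))):ℝ) / (p:ℝ) +
          (↑(n2 * (B2:ℤ) + m2 * ((Y2:ℤ) * (p:ℤ))):ℝ) / (p:ℝ)^2)
      else 0)
    = (p:ℂ) * (p:ℂ)^2 * midTerm p n2 m1 m2 C1 := by
  haveI : NeZero p := ⟨hp.ne_zero⟩
  simp only [triple p hp n2 m1 m2 C1]
  unfold midTerm
  by_cases hg : C1.gcd p = 1
  · rw [if_pos hg]
    have hC1u : IsUnit ((C1 : ℕ) : ZMod p) := (ZMod.isUnit_iff_coprime C1 p).2 hg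
    set z1 : ℕ := ((C1 : ZMod p)⁻¹).val with hz1def
    have hz1lt : z1 < p := ZMod.val_lt _
    have hz1cast : ((z1 : ℕ) : ZMod p) = ((C1 : ZMod p))⁻¹ := by
      rw [hz1def, ZMod.natCast_val, ZMod.cast_id]
    have hc5iff : ∀ Z1 : ℕ, (((Z1:ℤ) * (C1:ℤ)) % (p:ℤ) = 1 % (p:ℤ) ↔
        (Z1 : ZMod p) * (C1 : ZMod p) = 1) := by
      intro Z1
      rw [mod_iff_zmod]
      push_cast
      rfl
    have hc5z1 : ((z1:ℤ) * (C1:ℤ)) % (p:ℤ) = 1 % (p:ℤ) := by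
      rw [hc5iff, hz1cast, ZMod.inv_mul_of_unit _ hC1u]
    have huniq : ∀ Z1 : ℕ, (Z1 : ZMod p) * (C1 : ZMod p) = 1 → (Z1 : ZMod p) = (z1 : ZMod p) := by
      intro Z1 h
      rw [hz1cast]
      calc (Z1 : ZMod p) = (Z1 : ZMod p) * ((C1 : ZMod p) * (C1 : ZMod p)⁻¹) := by
            rw [ZMod.mul_inv_of_unit _ hC1u, mul_one]
        _ = ((Z1 : ZMod p) * (C1 : ZMod p)) * (C1 : ZMod p)⁻¹ := by ring
        _ = (C1 : ZMod p)⁻¹ := by rw [h, one_mul]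
    have hY1 : ∀ Y1 ∈ range p,
        (∑ Z1 ∈ range p, ∑ B2 ∈ range (p^2),
          if C1.gcd p = 1 ∧ B2.gcd (p^2) = 1 ∧ ((Z1:ℤ) * (C1:ℤ)) % (p:ℤ) = 1 % (p:ℤ) then
            ((p:ℂ))^2 * Ebar p n2 m1 m2 Y1 Z1 B2 else 0)
        = (p:ℂ)^2 * ∑ B2 ∈ range (p^2), (if B2.gcd (p^2) = 1 then
            Ebar p n2 m1 m2 0 z1 B2 else 0) := by
      intro Y1 _
      rw [Finset.sum_eq_single_of_mem z1 (mem_range.2 hz1lt) ?hZ1]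
      case hZ1 =>
        intro b hbr hb
        refine Finset.sum_eq_zero fun B2 _ => ?_
        rw [if_neg]
        rintro ⟨-, -, hc5⟩
        exact hb (natcast_inj_of_lt (mem_range.1 hbr) hz1lt (huniq b ((hc5iff b).mp hc5)))
      rw [Finset.mul_sum]
      refine Finset.sum_congr rfl fun B2 _ => ?_
      by_cases hB2 : B2.gcd (p^2) = 1
      · rw [if_pos ⟨hg, hB2, hc5z1⟩, if_pos hB2, Ebar_Y1 p hp n2 m1 m2 Y1 z1 B2]
      · rw [if_neg (by rintro ⟨-, h, -⟩; exact hB2 h), if_neg hB2, mul_zero]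
    rw [Finset.sum_congr rfl hY1, Finset.sum_const, card_range, nsmul_eq_mul]
    ring
  · rw [if_neg hg]
    rw [mul_zero]
    refine Finset.sum_eq_zero fun Y1 _ => Finset.sum_eq_zero fun Z1 _ =>
      Finset.sum_eq_zero fun B2 _ => ?_
    rw [if_neg]
    rintro ⟨h, -⟩
    exact hg h

lemma zmod_inv_eq {n : ℕ} (x y : ZMod n) (h : x * y = 1) : x⁻¹ = y := by
  have hu : IsUnit x := IsUnit.of_mul_eq_one _ h
  calc x⁻¹ = x⁻¹ * (x * y) := by rw [h, mul_one]
    _ = (x⁻¹ * x) * y := by ring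
    _ = y := by rw [ZMod.inv_mul_of_unit _ hu, one_mul]

lemma K2_eval (p : ℕ) (hp : p.Prime) (n2 m2 : ℤ) :
    Kloosterman2 n2 (m2 * p) (p^2) =
      ∑ B2 ∈ range (p^2), (if B2.gcd (p^2) = 1 then
        eChar ((↑(n2 * (B2:ℤ) + m2 * ((((B2 : ZMod (p^2))⁻¹).val : ℤ) * (p:ℤ))):ℝ) / (p:ℝ)^2)
      else 0) := by
  haveI : NeZero (p^2) := ⟨pow_ne_zero 2 hp.ne_zero⟩
  unfold Kloosterman2
  refine Finset.sum_congr rfl fun x hxr => ?_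
  have hmod : ∀ y : ℕ, (((x:ℤ) * (y:ℤ)) % ((p^2 : ℕ):ℤ) = 1 % ((p^2:ℕ):ℤ) ↔
      (x : ZMod (p^2)) * (y : ZMod (p^2)) = 1) := by
    intro y
    rw [mod_iff_zmod]
    push_cast
    rfl
  by_cases hx : x.gcd (p^2) = 1
  · rw [if_pos hx]
    have hu : IsUnit ((x:ℕ) : ZMod (p^2)) := (ZMod.isUnit_iff_coprime x (p^2)).2 hx
    set yb : ℕ := ((x : ZMod (p^2))⁻¹).val with hybdef
    have hyblt : yb < p^2 := ZMod.val_lt _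
    have hybcast : ((yb : ℕ) : ZMod (p^2)) = ((x : ZMod (p^2)))⁻¹ := by
      rw [hybdef, ZMod.natCast_val, ZMod.cast_id]
    rw [Finset.sum_eq_single_of_mem yb (mem_range.2 hyblt) ?hy]
    case hy =>
      intro b hbr hb
      rw [if_neg]
      intro hc
      have h1 : (x : ZMod (p^2)) * (b : ZMod (p^2)) = 1 := (hmod b).mp hc
      have : (b : ZMod (p^2)) = (yb : ZMod (p^2)) := by
        rw [hybcast, zmod_inv_eq _ _ h1]
      exact hb (natcast_inj_of_lt (mem_range.1 hbr) hyblt this)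
    rw [if_pos]
    · congr 1
      push_cast
      ring
    · rw [hmod yb, hybcast, ZMod.mul_inv_of_unit _ hu]
  · rw [if_neg hx]
    refine Finset.sum_eq_zero fun y _ => ?_
    rw [if_neg]
    intro hc
    have h1 : (x : ZMod (p^2)) * (y : ZMod (p^2)) = 1 := (hmod y).mp hc
    exact hx ((ZMod.isUnit_iff_coprime x (p^2)).1 (IsUnit.of_mul_eq_one _ h1))

lemma ram_eval (p : ℕ) (hp : p.Prime) (m1 n2 m2 : ℤ) (B2 : ℕ) (hB2 : B2.gcd (p^2) = 1) :
    (∑ C1 ∈ range p, if C1.gcd p = 1 then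
      eChar ((↑(m1 * (((0:ℕ):ℤ) * (p:ℤ)^2 - ((((C1 : ZMod p)⁻¹).val):ℤ) * (B2:ℤ))):ℝ) / (p:ℝ))
    else 0) = ramanujanSum p m1 := by
  haveI : NeZero p := ⟨hp.ne_zero⟩
  have hB2p : Nat.Coprime B2 p := Nat.Coprime.coprime_dvd_right (dvd_pow_self p two_ne_zero) hB2
  have hB2u : IsUnit ((B2:ℕ) : ZMod p) := (ZMod.isUnit_iff_coprime B2 p).2 hB2p
  unfold ramanujanSum
  rw [← Finset.sum_filter, ← Finset.sum_filter]
  set F : ℕ → ℕ := fun x => ((-(((x:ℕ) : ZMod p)⁻¹ * ((B2:ℕ) : ZMod p))).val) with hF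
  have hFmem : ∀ x ∈ (range p).filter (fun c => c.gcd p = 1),
      F x ∈ (range p).filter (fun c => c.gcd p = 1) := by
    intro x hx
    rw [mem_filter] at hx ⊢
    obtain ⟨hxr, hxg⟩ := hx
    have hxu : IsUnit ((x:ℕ) : ZMod p) := (ZMod.isUnit_iff_coprime x p).2 hxg
    have hxui : IsUnit (((x:ℕ) : ZMod p))⁻¹ :=
      IsUnit.of_mul_eq_one _ (ZMod.inv_mul_of_unit _ hxu)
    have hFu : IsUnit ((F x : ℕ) : ZMod p) := by
      rw [hF]
      simp only
      rw [ZMod.natCast_val, ZMod.cast_id]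
      exact (hxui.mul hB2u).neg
    exact ⟨mem_range.2 (ZMod.val_lt _), (ZMod.isUnit_iff_coprime (F x) p).1 hFu⟩
  have hFinv : ∀ x ∈ (range p).filter (fun c => c.gcd p = 1), F (F x) = x := by
    intro x hx
    rw [mem_filter] at hx
    obtain ⟨hxr, hxg⟩ := hx
    have hxu : IsUnit ((x:ℕ) : ZMod p) := (ZMod.isUnit_iff_coprime x p).2 hxg
    have hcast : ((F x : ℕ) : ZMod p) = -(((x:ℕ) : ZMod p)⁻¹ * ((B2:ℕ) : ZMod p)) := by
      rw [hF]; simp only; rw [ZMod.natCast_val, ZMod.cast_id]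
    have hinv : (((F x : ℕ) : ZMod p))⁻¹ = -(((x:ℕ) : ZMod p) * (((B2:ℕ) : ZMod p))⁻¹) := by
      apply zmod_inv_eq
      rw [hcast]
      have e1 : ((x:ℕ) : ZMod p)⁻¹ * ((x:ℕ) : ZMod p) = 1 := ZMod.inv_mul_of_unit _ hxu
      have e2 : ((B2:ℕ) : ZMod p) * (((B2:ℕ) : ZMod p))⁻¹ = 1 := ZMod.mul_inv_of_unit _ hB2u
      calc -(((x:ℕ) : ZMod p)⁻¹ * ((B2:ℕ) : ZMod p)) * -(((x:ℕ) : ZMod p) * (((B2:ℕ) : ZMod p))⁻¹)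
          = (((x:ℕ) : ZMod p)⁻¹ * ((x:ℕ) : ZMod p)) * (((B2:ℕ) : ZMod p) * (((B2:ℕ) : ZMod p))⁻¹) := by
            ring
        _ = 1 := by rw [e1, e2, mul_one]
    have : ((F (F x) : ℕ) : ZMod p) = ((x:ℕ) : ZMod p) := by
      conv_lhs => rw [hF]
      simp only
      rw [ZMod.natCast_val, ZMod.cast_id, hinv]
      have e2 : (((B2:ℕ) : ZMod p))⁻¹ * ((B2:ℕ) : ZMod p) = 1 := ZMod.inv_mul_of_unit _ hB2u
      calc -(-(((x:ℕ) : ZMod p) * (((B2:ℕ) : ZMod p))⁻¹) * ((B2:ℕ) : ZMod p))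
          = ((x:ℕ) : ZMod p) * ((((B2:ℕ) : ZMod p))⁻¹ * ((B2:ℕ) : ZMod p)) := by ring
        _ = ((x:ℕ) : ZMod p) := by rw [e2, mul_one]
    have hFxmem := hFmem (F x) (hFmem x (mem_filter.2 ⟨hxr, hxg⟩))
    rw [mem_filter] at hFxmem
    exact natcast_inj_of_lt (mem_range.1 hFxmem.1) (mem_range.1 hxr) this
  refine Finset.sum_nbij' F F hFmem hFmem hFinv hFinv ?_
  intro x hx
  rw [mem_filter] at hx
  obtain ⟨hxr, hxg⟩ := hx
  have hxu : IsUnit ((x:ℕ) : ZMod p) := (ZMod.isUnit_iff_coprime x p).2 hxg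
  have hcast : ((F x : ℕ) : ZMod p) = -(((x:ℕ) : ZMod p)⁻¹ * ((B2:ℕ) : ZMod p)) := by
    rw [hF]; simp only; rw [ZMod.natCast_val, ZMod.cast_id]
  have hz1cast : ((((x : ZMod p)⁻¹).val : ℕ) : ZMod p) = ((x:ℕ) : ZMod p)⁻¹ := by
    rw [ZMod.natCast_val, ZMod.cast_id]
  rw [show ((F x : ℕ):ℝ) * (m1:ℝ) = (((F x : ℕ) * m1 : ℤ):ℝ) from by push_cast; ring]
  symm
  apply eChar_div_congr p hp.ne_zero
  rw [show ((p:ℕ):ℤ) = (p:ℤ) from rfl]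
  have key : (((m1 * (((0:ℕ):ℤ) * (p:ℤ)^2 - ((((x : ZMod p)⁻¹).val):ℤ) * (B2:ℤ))) - ((F x : ℕ) * m1 : ℤ) : ℤ) : ZMod p) = 0 := by
    push_cast
    rw [hcast, hz1cast]
    ring
  have := (ZMod.intCast_zmod_eq_zero_iff_dvd _ p).1 key
  exact_mod_cast this

/-- for a prime `p`,
`S^{(p)}(n1,n2,m1,m2;p,p²) = r_p(m1) · S(n2, m2 p; p²)`. -/
theorem kloosterman3_level_p_p_psq (p : ℕ) (hp : p.Prime) (n1 n2 m1 m2 : ℤ) :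
    Kloosterman3 p n1 n2 m1 m2 p (p ^ 2) =
      ramanujanSum p m1 * Kloosterman2 n2 (m2 * p) (p ^ 2) := by
  have hp0 : 0 < p := hp.pos
  rw [Kloosterman3]
  rw [Finset.sum_eq_single_of_mem 0 (mem_range.2 hp0) ?hz]
  case hz =>
    intro b hbr hb
    refine Finset.sum_eq_zero fun C1 _ => Finset.sum_eq_zero fun Y1 _ => Finset.sum_eq_zero fun Z1 _ =>
      Finset.sum_eq_zero fun B2 _ => Finset.sum_eq_zero fun C2 _ => Finset.sum_eq_zero fun Y2 _ =>
      Finset.sum_eq_zero fun Z2 _ => ?_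
    rw [if_neg]
    rintro ⟨-, -, -, hdvd, -⟩
    have h1 : (p:ℤ) ≤ (b:ℤ) := Int.le_of_dvd (by exact_mod_cast Nat.pos_of_ne_zero hb) hdvd
    have h2 : b < p := mem_range.1 hbr
    omega
  simp only [Nat.cast_zero, zero_mul, mul_zero, add_zero, zero_add, Nat.cast_pow,
    Nat.gcd_zero_left, sub_zero, dvd_zero, true_and]
  rw [Finset.sum_congr rfl (fun C1 _ => sextuple p hp n2 m1 m2 C1)]
  rw [← Finset.mul_sum]
  have hne : (p:ℂ) * (p:ℂ)^2 ≠ 0 := by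
    have h : (p:ℂ) ≠ 0 := Nat.cast_ne_zero.2 hp.ne_zero
    exact mul_ne_zero h (pow_ne_zero 2 h)
  rw [one_div, inv_mul_cancel_left₀ hne]
  -- now: ∑ C1, midTerm = ram * K2
  have hmid : ∑ C1 ∈ range p, midTerm p n2 m1 m2 C1
      = ∑ B2 ∈ range (p^2), ∑ C1 ∈ range p,
        (if C1.gcd p = 1 ∧ B2.gcd (p^2) = 1 then
          Ebar p n2 m1 m2 0 (((C1 : ZMod p)⁻¹).val) B2 else 0) := by
    rw [Finset.sum_comm]
    refine Finset.sum_congr rfl fun C1 _ => ?_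
    unfold midTerm
    by_cases hg : C1.gcd p = 1
    · rw [if_pos hg]
      refine Finset.sum_congr rfl fun B2 _ => ?_
      by_cases hB2 : B2.gcd (p^2) = 1
      · rw [if_pos hB2, if_pos ⟨hg, hB2⟩]
      · rw [if_neg hB2, if_neg (by rintro ⟨-, h⟩; exact hB2 h)]
    · rw [if_neg hg]
      symm
      refine Finset.sum_eq_zero fun B2 _ => ?_
      rw [if_neg (by rintro ⟨h, -⟩; exact hg h)]
  rw [hmid, K2_eval p hp n2 m2, Finset.mul_sum]
  refine Finset.sum_congr rfl fun B2 _ => ?_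
  by_cases hB2 : B2.gcd (p^2) = 1
  · have hsplit : ∀ C1 : ℕ,
        (if C1.gcd p = 1 ∧ B2.gcd (p^2) = 1 then
          Ebar p n2 m1 m2 0 (((C1 : ZMod p)⁻¹).val) B2 else 0)
        = (if C1.gcd p = 1 then
            eChar ((↑(m1 * (((0:ℕ):ℤ) * (p:ℤ)^2 - ((((C1 : ZMod p)⁻¹).val):ℤ) * (B2:ℤ))):ℝ) / (p:ℝ))
          else 0) *
          eChar ((↑(n2 * (B2:ℤ) + m2 * ((((B2 : ZMod (p^2))⁻¹).val : ℤ) * (p:ℤ))):ℝ) / (p:ℝ)^2) := by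
      intro C1
      by_cases hg : C1.gcd p = 1
      · rw [if_pos ⟨hg, hB2⟩, if_pos hg]
        unfold Ebar
        rw [eChar_add]
      · rw [if_neg (by rintro ⟨h, -⟩; exact hg h), if_neg hg, zero_mul]
    rw [Finset.sum_congr rfl (fun C1 _ => hsplit C1), ← Finset.sum_mul,
      ram_eval p hp m1 n2 m2 B2 hB2, if_pos hB2]
  · rw [if_neg hB2, mul_zero]
    refine Finset.sum_eq_zero fun C1 _ => ?_
    rw [if_neg (by rintro ⟨-, h⟩; exact hB2 h)]
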